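/- Let n ≥ 2 be an integer, let U(n) denote the compact group of n×n complex unitary matrices with its Borel σ-algebra and normalized Haar probability measure μ. Define W = Σ_{j,k=1}^{n} E_{j,k} ⊗ E_{k,j} ∈ M_{n²}(ℂ), Π_0 = (1_{n²} + W)/2 and Π_1 = (1_{n²} − W)/2. Then for every X ∈ M_{n²}(ℂ) and all indices i, j, ∫_{U(n)} ((U⊗U) X (U⊗U)ᴴ)(i,j) dμ(U) = [ (2/(n(n+1)))·⟨Π_0, X⟩·Π_0 + (2/(n(n−1)))·⟨Π_1, X⟩·Π_1 ](i,j), where ⟨A,B⟩ = Tr(AᴴB). -/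

import Mathlib

open Matrix BigOperators MeasureTheory Kronecker

variable {n : ℕ}

noncomputable def swapMat (n : ℕ) : Matrix (Fin n × Fin n) (Fin n × Fin n) ℂ :=
  Matrix.of fun p q => if p.1 = q.2 ∧ p.2 = q.1 then 1 else 0

lemma swapMat_eq (n : ℕ) :
    (∑ j : Fin n, ∑ k : Fin n,
      Matrix.single j k (1 : ℂ) ⊗ₖ Matrix.single k j (1 : ℂ)) = swapMat n := by
  ext ⟨a, b⟩ ⟨c, d⟩
  simp only [Matrix.sum_apply, kroneckerMap_apply, single, swapMat, of_apply,
    Matrix.of_apply]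
  simp only [mul_ite, ite_mul, one_mul, mul_one, mul_zero, zero_mul]
  rw [Finset.sum_comm]
  by_cases h : a = d ∧ b = c
  · obtain ⟨rfl, rfl⟩ := h
    rw [Finset.sum_eq_single b]
    · rw [Finset.sum_eq_single a] <;> aesop
    · intro k _ hk
      rw [Finset.sum_eq_zero]; aesop
    · simp
  · simp only [if_neg h]
    rw [Finset.sum_eq_zero]; intro k _
    rw [Finset.sum_eq_zero]; aesop

lemma mul_swapMat (M : Matrix (Fin n × Fin n) (Fin n × Fin n) ℂ) (p q : Fin n × Fin n) :
    (M * swapMat n) p q = M p (q.2, q.1) := by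
  rw [Matrix.mul_apply]
  simp only [swapMat, of_apply, mul_ite, mul_one, mul_zero]
  rw [Finset.sum_eq_single (q.2, q.1)] <;> aesop

lemma swapMat_mul (M : Matrix (Fin n × Fin n) (Fin n × Fin n) ℂ) (p q : Fin n × Fin n) :
    (swapMat n * M) p q = M (p.2, p.1) q := by
  rw [Matrix.mul_apply]
  simp only [swapMat, of_apply, ite_mul, one_mul, zero_mul]
  rw [Finset.sum_eq_single (p.2, p.1)] <;> aesop

lemma swapMat_conjTranspose : (swapMat n)ᴴ = swapMat n := by
  ext ⟨a,b⟩ ⟨c,d⟩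
  simp only [conjTranspose_apply, swapMat, of_apply, apply_ite (star : ℂ → ℂ), star_one, star_zero]
  have : (c = b ∧ d = a) ↔ (a = d ∧ b = c) := by constructor <;> rintro ⟨rfl, rfl⟩ <;> simp
  exact if_congr this rfl rfl

lemma swapMat_mul_self : swapMat n * swapMat n = 1 := by
  ext p q
  rw [swapMat_mul]
  simp only [swapMat, of_apply, Matrix.one_apply, Prod.ext_iff]
  aesop

lemma trace_swapMat : (swapMat n).trace = n := by
  simp only [Matrix.trace, Matrix.diag, swapMat, of_apply]
  rw [Fintype.sum_prod_type]
  have : ∀ a : Fin n, (∑ b : Fin n, if a = b ∧ b = a then (1:ℂ) else 0) = 1 := by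
    intro a
    rw [Finset.sum_eq_single a] <;> aesop
  simp [this]

lemma trace_one' : (1 : Matrix (Fin n × Fin n) (Fin n × Fin n) ℂ).trace = (n:ℂ)^2 := by
  simp [Matrix.trace_one]; ring

lemma sum_one' (a : Fin n) (f : Fin n → ℂ) (hf : ∀ k, k ≠ a → f k = 0) :
    ∑ k, f k = f a := Finset.sum_eq_single a (fun k _ hk => hf k hk) (by simp)

lemma sum_two' {a b : Fin n} (hab : a ≠ b) (f : Fin n → ℂ)
    (hf : ∀ k, k ≠ a → k ≠ b → f k = 0) : ∑ k, f k = f a + f b := by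
  rw [← Finset.sum_pair hab]
  exact (Finset.sum_subset (Finset.subset_univ _) (fun x _ hx => by
    simp only [Finset.mem_insert, Finset.mem_singleton, not_or] at hx
    exact hf x hx.1 hx.2)).symm

/-- permutation matrix -/
noncomputable def pmat {ι : Type*} [Fintype ι] [DecidableEq ι] (σ : Equiv.Perm ι) :
    Matrix ι ι ℂ := Matrix.of fun i j => if σ j = i then 1 else 0

lemma pmat_mem (σ : Equiv.Perm (Fin n)) : pmat σ ∈ Matrix.unitaryGroup (Fin n) ℂ := by
  rw [Matrix.mem_unitaryGroup_iff]
  ext i j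
  rw [Matrix.star_eq_conjTranspose, Matrix.mul_apply]
  simp only [conjTranspose_apply]
  rw [sum_one' (σ⁻¹ i) _ (fun k hk => ?_)]
  · simp only [pmat, Matrix.of_apply, Equiv.Perm.inv_def, Equiv.apply_symm_apply, if_pos rfl, one_mul,
      Matrix.one_apply]
    split_ifs with h <;> simp_all
  · simp only [pmat, Matrix.of_apply]
    rw [if_neg, zero_mul]
    exact fun h => hk (by rw [← h, Equiv.Perm.inv_def, Equiv.symm_apply_apply])

lemma pmat_kron (σ : Equiv.Perm (Fin n)) :
    (pmat σ) ⊗ₖ (pmat σ) = pmat (σ.prodCongr σ) := by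
  ext ⟨a, b⟩ ⟨c, d⟩
  simp only [kroneckerMap_apply, pmat, Matrix.of_apply, Equiv.prodCongr_apply, Prod.map,
    Prod.mk.injEq, ite_mul, one_mul, zero_mul]
  split_ifs <;> simp_all

lemma pmat_mul_apply {ι : Type*} [Fintype ι] [DecidableEq ι] (σ : Equiv.Perm ι)
    (M : Matrix ι ι ℂ) (i j : ι) : (pmat σ * M) i j = M (σ⁻¹ i) j := by
  rw [Matrix.mul_apply]
  rw [Finset.sum_eq_single (σ⁻¹ i) (fun k _ hk => by
    simp only [pmat, Matrix.of_apply]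
    rw [if_neg (fun h => hk (by simp [← h])), zero_mul]) (by simp)]
  simp [pmat]

lemma mul_pmat_apply {ι : Type*} [Fintype ι] [DecidableEq ι] (σ : Equiv.Perm ι)
    (M : Matrix ι ι ℂ) (i j : ι) : (M * pmat σ) i j = M i (σ j) := by
  rw [Matrix.mul_apply]
  rw [Finset.sum_eq_single (σ j) (fun k _ hk => by
    simp only [pmat, Matrix.of_apply]
    rw [if_neg (fun h => hk h.symm), mul_zero]) (by simp)]
  simp [pmat]

lemma exists_perm_two {a b a' b' : Fin n} (hab : a ≠ b) (hab' : a' ≠ b') :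
    ∃ σ : Equiv.Perm (Fin n), σ a = a' ∧ σ b = b' := by
  refine ⟨(Equiv.swap a a').trans (Equiv.swap ((Equiv.swap a a') b) b'), ?_, ?_⟩
  · simp only [Equiv.trans_apply, Equiv.swap_apply_left]
    rw [Equiv.swap_apply_of_ne_of_ne]
    · intro h
      have : b = a := (Equiv.swap a a').injective
        (by rw [Equiv.swap_apply_left]; exact h.symm)
      exact hab this.symm
    · exact hab'
  · simp only [Equiv.trans_apply]
    exact Equiv.swap_apply_left _ _

lemma diag_mem (e : Fin n → ℂ) (he : ∀ i, e i * star (e i) = 1) :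
    Matrix.diagonal e ∈ Matrix.unitaryGroup (Fin n) ℂ := by
  rw [Matrix.mem_unitaryGroup_iff, Matrix.star_eq_conjTranspose,
    Matrix.diagonal_conjTranspose, Matrix.diagonal_mul_diagonal]
  simp only [Pi.star_apply]
  rw [show (fun i => e i * star (e i)) = fun _ => (1:ℂ) from funext he]
  exact Matrix.diagonal_one

/-- The key commutant lemma. -/
theorem commutant_lemma (hn : 2 ≤ n) (M : Matrix (Fin n × Fin n) (Fin n × Fin n) ℂ)
    (hM : ∀ V : Matrix.unitaryGroup (Fin n) ℂ,
      ((V : Matrix (Fin n) (Fin n) ℂ) ⊗ₖ (V : Matrix (Fin n) (Fin n) ℂ)) * M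
        = M * ((V : Matrix (Fin n) (Fin n) ℂ) ⊗ₖ (V : Matrix (Fin n) (Fin n) ℂ))) :
    ∃ β γ : ℂ, M = β • (1 : Matrix (Fin n × Fin n) (Fin n × Fin n) ℂ)
      + γ • swapMat n := by
  -- Step 1: diagonal commutation
  have hDiag : ∀ (e : Fin n → ℂ), (∀ i, e i * star (e i) = 1) →
      ∀ (a b c d : Fin n), (e a * e b) * M (a,b) (c,d) = M (a,b) (c,d) * (e c * e d) := by
    intro e he a b c d
    have h := hM ⟨Matrix.diagonal e, diag_mem e he⟩
    have h2 : (Matrix.diagonal e ⊗ₖ Matrix.diagonal e) * M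
        = M * (Matrix.diagonal e ⊗ₖ Matrix.diagonal e) := h
    rw [Matrix.diagonal_kronecker_diagonal] at h2
    have h3 := congrFun (congrFun h2 (a,b)) (c,d)
    rwa [Matrix.diagonal_mul, Matrix.mul_diagonal] at h3
  -- Step 2: vanishing off the "multiset-equal" pattern
  have hkill : ∀ (a b c d x : Fin n),
      ((if a = x then Complex.I else 1) * (if b = x then Complex.I else 1) ≠
       (if c = x then Complex.I else 1) * (if d = x then Complex.I else 1)) →
      M (a,b) (c,d) = 0 := by
    intro a b c d x hne
    set e : Fin n → ℂ := fun i => if i = x then Complex.I else 1 with he_def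
    have he : ∀ i, e i * star (e i) = 1 := by
      intro i; simp only [he_def]
      split_ifs <;> simp [Complex.star_def, Complex.mul_conj']
    have := hDiag e he a b c d
    rw [mul_comm (M (a,b) (c,d))] at this
    have hz : (e a * e b - e c * e d) * M (a,b) (c,d) = 0 := by
      rw [sub_mul, this, sub_self]
    rcases mul_eq_zero.1 hz with h | h
    · exact absurd (sub_eq_zero.1 h) hne
    · exact h
  have hI1 : Complex.I ≠ (1:ℂ) := by
    intro h
    simpa using congrArg Complex.im h
  have hvanish : ∀ (a b c d : Fin n), ¬((c = a ∧ d = b) ∨ (c = b ∧ d = a)) →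
      M (a,b) (c,d) = 0 := by
    intro a b c d hne
    by_cases hac : a = c
    · -- then can't have d = b; also from patterns...
      by_cases had : a = d
      · -- c = d = a ; so need b ≠ a (else pattern holds); kill with x = b
        apply hkill a b c d b
        have hba : ¬ b = a := fun h => hne (Or.inl ⟨hac.symm, by rw [← had, h]⟩)
        rw [if_neg (fun h : a = b => hba h.symm), if_pos rfl,
          if_neg (fun h : c = b => hba (by rw [← h, ← hac])),
          if_neg (fun h : d = b => hba (by rw [← h, ← had]))]
        simp [hI1]
      · -- a = c, a ≠ d: need b ≠ d; kill with x = d? count of d: lhs: [b=d], rhs: 1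
        have hbd : ¬ b = d := fun h => hne (Or.inl ⟨hac.symm, h.symm⟩)
        apply hkill a b c d d
        rw [if_neg had, if_neg hbd, if_neg (fun h : c = d => had (hac.trans h)), if_pos rfl]
        simp [hI1, Ne.symm hI1]
    · by_cases had : a = d
      · -- a = d, a ≠ c: need b ≠ c
        have hbc : ¬ b = c := fun h => hne (Or.inr ⟨h.symm, had.symm⟩)
        apply hkill a b c d c
        rw [if_neg hac, if_neg hbc, if_pos rfl, if_neg (fun h : d = c => hac (had.trans h))]
        simp [Ne.symm hI1]
      · -- a ∉ {c, d}: kill with x = a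
        apply hkill a b c d a
        rw [if_pos rfl, if_neg (fun h : c = a => hac h.symm),
          if_neg (fun h : d = a => had h.symm)]
        by_cases hba : b = a
        · rw [if_pos hba]; simp [Complex.I_mul_I]; norm_num
        · rw [if_neg hba]; simp [hI1]
  -- Step 3: permutation invariance
  have hPerm : ∀ (σ : Equiv.Perm (Fin n)) (i j : Fin n × Fin n),
      M i j = M (σ.prodCongr σ i) (σ.prodCongr σ j) := by
    intro σ i j
    have h := hM ⟨pmat σ, pmat_mem σ⟩
    have h2 : pmat (σ.prodCongr σ) * M = M * pmat (σ.prodCongr σ) := by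
      rw [← pmat_kron]; exact h
    have h3 := congrFun (congrFun h2 (σ.prodCongr σ i)) j
    rw [pmat_mul_apply, mul_pmat_apply, Equiv.Perm.inv_def, Equiv.symm_apply_apply] at h3
    exact h3
  -- Step 4: the three constants
  have h0n : 0 < n := lt_of_lt_of_le (by norm_num) hn
  have h1n : 1 < n := lt_of_lt_of_le (by norm_num) hn
  set z0 : Fin n := ⟨0, h0n⟩ with hz0
  set z1 : Fin n := ⟨1, h1n⟩ with hz1
  have hz01 : z0 ≠ z1 := by simp [hz0, hz1, Fin.ext_iff]
  set α : ℂ := M (z0,z0) (z0,z0) with hα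
  set β : ℂ := M (z0,z1) (z0,z1) with hβ
  set γ : ℂ := M (z0,z1) (z1,z0) with hγ
  have hββ : ∀ a b : Fin n, a ≠ b → M (a,b) (a,b) = β := by
    intro a b hab
    obtain ⟨σ, hσa, hσb⟩ := exists_perm_two hz01 hab
    have := hPerm σ (z0,z1) (z0,z1)
    simpa [Equiv.prodCongr_apply, hσa, hσb] using this.symm
  have hγγ : ∀ a b : Fin n, a ≠ b → M (a,b) (b,a) = γ := by
    intro a b hab
    obtain ⟨σ, hσa, hσb⟩ := exists_perm_two hz01 hab
    have := hPerm σ (z0,z1) (z1,z0)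
    simpa [Equiv.prodCongr_apply, hσa, hσb] using this.symm
  have hαα : ∀ a : Fin n, M (a,a) (a,a) = α := by
    intro a
    have := hPerm (Equiv.swap z0 a) (z0,z0) (z0,z0)
    simpa [Equiv.prodCongr_apply, Equiv.swap_apply_left] using this.symm
  -- Step 5: rotation unitary giving α = β + γ
  set R : Matrix (Fin n) (Fin n) ℂ := Matrix.of (fun i j =>
    if i = z0 then (if j = z0 then (3/5:ℂ) else if j = z1 then 4/5 else 0)
    else if i = z1 then (if j = z0 then (4/5:ℂ) else if j = z1 then -(3/5) else 0)
    else if j = i then 1 else 0) with hRdef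
  have hRmem : R ∈ Matrix.unitaryGroup (Fin n) ℂ := by
    rw [Matrix.mem_unitaryGroup_iff, Matrix.star_eq_conjTranspose]
    ext i j
    rw [Matrix.mul_apply]
    simp only [Matrix.conjTranspose_apply]
    rcases eq_or_ne i z0 with rfl | hi0
    · rcases eq_or_ne j z0 with rfl | hj0
      · rw [sum_two' hz01 _ (fun k hk0 hk1 => by
          simp [hRdef, hk0, hk1])]
        norm_num [hRdef, hz01, hz01.symm, Matrix.one_apply]
      · rcases eq_or_ne j z1 with rfl | hj1
        · rw [sum_two' hz01 _ (fun k hk0 hk1 => by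
            simp [hRdef, hk0, hk1, hz01.symm])]
          norm_num [hRdef, hz01, hz01.symm, Matrix.one_apply]
        · rw [sum_one' j _ (fun k hk => by
            simp [hRdef, hj0, hj1, hk, Ne.symm hk])]
          norm_num [hRdef, hj0, hj1, Ne.symm hj0, Matrix.one_apply]
    · rcases eq_or_ne i z1 with rfl | hi1
      · rcases eq_or_ne j z0 with rfl | hj0
        · rw [sum_two' hz01 _ (fun k hk0 hk1 => by
            simp [hRdef, hk0, hk1, hz01.symm])]
          norm_num [hRdef, hz01, hz01.symm, Matrix.one_apply]
        · rcases eq_or_ne j z1 with rfl | hj1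
          · rw [sum_two' hz01 _ (fun k hk0 hk1 => by
              simp [hRdef, hk0, hk1, hz01.symm])]
            norm_num [hRdef, hz01, hz01.symm, Matrix.one_apply]
          · rw [sum_one' j _ (fun k hk => by
              simp [hRdef, hj0, hj1, hk, Ne.symm hk, hz01.symm])]
            norm_num [hRdef, hj0, hj1, hz01.symm, Ne.symm hj0, Ne.symm hj1, Matrix.one_apply]
      · rcases eq_or_ne j z0 with rfl | hj0
        · rw [sum_one' i _ (fun k hk => by
            simp [hRdef, hi0, hi1, hk, Ne.symm hk])]
          norm_num [hRdef, hi0, hi1, Ne.symm hi0, Matrix.one_apply]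
        · rcases eq_or_ne j z1 with rfl | hj1
          · rw [sum_one' i _ (fun k hk => by
              simp [hRdef, hi0, hi1, hk, Ne.symm hk])]
            norm_num [hRdef, hi0, hi1, Ne.symm hi1, Matrix.one_apply]
          · rw [sum_one' i _ (fun k hk => by
              simp [hRdef, hi0, hi1, hk, Ne.symm hk])]
            by_cases hij : i = j
            · simp [hRdef, hij, hj0, hj1, Matrix.one_apply]
            · simp [hRdef, hi0, hi1, hj0, hj1, hij, Ne.symm hij, Matrix.one_apply]
  -- Step 6: α = β + γ via the rotation
  have hz10 : z1 ≠ z0 := Ne.symm hz01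
  have hRc := hM ⟨R, hRmem⟩
  have h3 := congrFun (congrFun hRc ((z0,z0) : Fin n × Fin n)) ((z0,z1) : Fin n × Fin n)
  rw [Matrix.mul_apply, Matrix.mul_apply] at h3
  simp only [Fintype.sum_prod_type, kroneckerMap_apply] at h3
  have e1 : (∑ p1 : Fin n, ∑ p2 : Fin n,
      R z0 p1 * R z0 p2 * M (p1, p2) (z0, z1)) = 12/25 * (β + γ) := by
    rw [sum_two' hz01 _ (fun k hk0 hk1 => Finset.sum_eq_zero fun p2 _ => by
      simp [hRdef, hk0, hk1])]
    rw [sum_two' hz01 _ (fun k hk0 hk1 => by simp [hRdef, hk0, hk1, hz01]),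
        sum_two' hz01 _ (fun k hk0 hk1 => by simp [hRdef, hk0, hk1, hz01])]
    rw [hvanish z0 z0 z0 z1 (by simp [hz01, Ne.symm hz01]),
        hvanish z1 z1 z0 z1 (by simp [hz01, Ne.symm hz01]),
        hββ z0 z1 hz01, hγγ z1 z0 (Ne.symm hz01)]
    simp only [hRdef, Matrix.of_apply, if_pos rfl, if_neg (Ne.symm hz01), if_neg hz01, if_true]
    ring
  have e2 : (∑ q1 : Fin n, ∑ q2 : Fin n,
      M (z0, z0) (q1, q2) * (R q1 z0 * R q2 z1)) = α * (12/25) := by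
    rw [sum_one' z0 _ (fun k hk => Finset.sum_eq_zero fun q2 _ => by
      rw [hvanish z0 z0 k q2 (by simp [hk]), zero_mul])]
    rw [sum_one' z0 _ (fun k hk => by
      rw [hvanish z0 z0 z0 k (by simp [hk]), zero_mul])]
    rw [← hα]
    simp only [hRdef, Matrix.of_apply, if_pos rfl, if_neg (Ne.symm hz01), if_neg hz01, if_true]
    ring
  rw [e1, e2] at h3
  have hαβγ : α = β + γ := by linear_combination (25/12 : ℂ) * h3.symm
  -- Conclusion
  refine ⟨β, γ, ?_⟩
  ext ⟨a, b⟩ ⟨c, d⟩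
  simp only [Matrix.add_apply, Matrix.smul_apply, Matrix.one_apply, Matrix.of_apply,
    smul_eq_mul, Prod.mk.injEq]
  by_cases h1 : c = a ∧ d = b
  · obtain ⟨rfl, rfl⟩ := h1
    by_cases hab : c = d
    · rw [hab, hαα d, hαβγ]
      simp [hab, swapMat]
    · rw [hββ c d hab]
      simp [hab, Ne.symm hab, swapMat]
  · by_cases h2 : c = b ∧ d = a
    · obtain ⟨rfl, rfl⟩ := h2
      have hdc : d ≠ c := fun h => h1 ⟨h.symm, h⟩
      rw [hγγ d c hdc]
      simp [hdc, Ne.symm hdc, swapMat]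
    · rw [hvanish a b c d (by tauto)]
      have hne1 : ¬(a = c ∧ b = d) := fun h => h1 ⟨h.1.symm, h.2.symm⟩
      have hne2 : ¬(a = d ∧ b = c) := fun h => h2 ⟨h.2.symm, h.1.symm⟩
      simp [hne1, hne2, swapMat]

lemma kron_conjT (A B : Matrix (Fin n) (Fin n) ℂ) : (A ⊗ₖ B)ᴴ = Aᴴ ⊗ₖ Bᴴ := by
  ext ⟨a, b⟩ ⟨c, d⟩
  simp [Matrix.conjTranspose_apply, Matrix.kroneckerMap_apply, star_mul', mul_comm]

lemma swap_comm_kron (A C : Matrix (Fin n) (Fin n) ℂ) :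
    swapMat n * (A ⊗ₖ C) = (C ⊗ₖ A) * swapMat n := by
  ext ⟨a, b⟩ ⟨c, d⟩
  rw [swapMat_mul, mul_swapMat]
  simp [Matrix.kroneckerMap_apply, mul_comm]

lemma unitary_entry_le (U : Matrix.unitaryGroup (Fin n) ℂ) (a b : Fin n) :
    ‖(U : Matrix (Fin n) (Fin n) ℂ) a b‖ ≤ 1 := by
  have h := Matrix.mem_unitaryGroup_iff.mp U.2
  have h2 := congrFun (congrFun h a) a
  rw [Matrix.mul_apply] at h2
  simp only [Matrix.star_apply, Matrix.one_apply_eq] at h2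
  have h3 : ∑ k : Fin n, Complex.normSq ((U : Matrix (Fin n) (Fin n) ℂ) a k) = 1 := by
    have h4 : ∑ k : Fin n,
        ((Complex.normSq ((U : Matrix (Fin n) (Fin n) ℂ) a k) : ℂ)) = 1 := by
      rw [← h2]
      exact Finset.sum_congr rfl fun k _ => by
        rw [← Complex.mul_conj, Complex.star_def]
    rw [← Complex.ofReal_sum] at h4
    exact_mod_cast h4
  have h5 : Complex.normSq ((U : Matrix (Fin n) (Fin n) ℂ) a b) ≤ 1 := by
    have := Finset.single_le_sum
      (f := fun k => Complex.normSq ((U : Matrix (Fin n) (Fin n) ℂ) a k))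
      (fun k _ => Complex.normSq_nonneg _) (Finset.mem_univ b)
    linarith
  have h6 : ‖(U : Matrix (Fin n) (Fin n) ℂ) a b‖ ^ 2
      = Complex.normSq ((U : Matrix (Fin n) (Fin n) ℂ) a b) := by
    rw [Complex.sq_norm]
  nlinarith [norm_nonneg ((U : Matrix (Fin n) (Fin n) ℂ) a b)]

lemma kron_entry_le (U : Matrix.unitaryGroup (Fin n) ℂ) (r s : Fin n × Fin n) :
    ‖((U : Matrix (Fin n) (Fin n) ℂ) ⊗ₖ (U : Matrix (Fin n) (Fin n) ℂ)) r s‖ ≤ 1 := by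
  rw [Matrix.kroneckerMap_apply, norm_mul]
  have h1 := unitary_entry_le U r.1 s.1
  have h2 := unitary_entry_le U r.2 s.2
  nlinarith [norm_nonneg ((U : Matrix (Fin n) (Fin n) ℂ) r.1 s.1),
    norm_nonneg ((U : Matrix (Fin n) (Fin n) ℂ) r.2 s.2)]

section Integration

variable [MeasurableSpace (Matrix.unitaryGroup (Fin n) ℂ)]
  [BorelSpace (Matrix.unitaryGroup (Fin n) ℂ)]
  (μ : Measure (Matrix.unitaryGroup (Fin n) ℂ)) [IsProbabilityMeasure μ]

lemma kf_integrable (X : Matrix (Fin n × Fin n) (Fin n × Fin n) ℂ) (p q : Fin n × Fin n) :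
    Integrable (fun U : Matrix.unitaryGroup (Fin n) ℂ =>
      (((U : Matrix (Fin n) (Fin n) ℂ) ⊗ₖ (U : Matrix (Fin n) (Fin n) ℂ)) * X *
        ((U : Matrix (Fin n) (Fin n) ℂ) ⊗ₖ (U : Matrix (Fin n) (Fin n) ℂ))ᴴ) p q) μ := by
  have hU : Continuous fun U : Matrix.unitaryGroup (Fin n) ℂ =>
      (U : Matrix (Fin n) (Fin n) ℂ) := continuous_subtype_val
  have hB : Continuous fun U : Matrix.unitaryGroup (Fin n) ℂ =>
      ((U : Matrix (Fin n) (Fin n) ℂ) ⊗ₖ (U : Matrix (Fin n) (Fin n) ℂ)) := by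
    apply continuous_matrix
    intro i k
    exact (hU.matrix_elem i.1 k.1).mul (hU.matrix_elem i.2 k.2)
  have hcont : Continuous fun U : Matrix.unitaryGroup (Fin n) ℂ =>
      (((U : Matrix (Fin n) (Fin n) ℂ) ⊗ₖ (U : Matrix (Fin n) (Fin n) ℂ)) * X *
        ((U : Matrix (Fin n) (Fin n) ℂ) ⊗ₖ (U : Matrix (Fin n) (Fin n) ℂ))ᴴ) p q :=
    ((hB.matrix_mul continuous_const).matrix_mul hB.matrix_conjTranspose).matrix_elem p q
  apply (integrable_const (∑ l : Fin n × Fin n, ∑ k : Fin n × Fin n, ‖X k l‖)).mono'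
    hcont.aestronglyMeasurable
  filter_upwards with U
  rw [Matrix.mul_apply]
  refine le_trans (norm_sum_le _ _) (Finset.sum_le_sum fun l _ => ?_)
  rw [norm_mul, Matrix.conjTranspose_apply, norm_star]
  refine le_trans (mul_le_of_le_one_right (norm_nonneg _) (kron_entry_le U q l)) ?_
  rw [Matrix.mul_apply]
  refine le_trans (norm_sum_le _ _) (Finset.sum_le_sum fun k _ => ?_)
  rw [norm_mul]
  exact mul_le_of_le_one_left (norm_nonneg _) (kron_entry_le U p k)

lemma mul_integral_mul (Bm C : Matrix (Fin n × Fin n) (Fin n × Fin n) ℂ)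
    (g : Matrix.unitaryGroup (Fin n) ℂ → Matrix (Fin n × Fin n) (Fin n × Fin n) ℂ)
    (hg : ∀ k l, Integrable (fun U => g U k l) μ) (p q : Fin n × Fin n) :
    (Bm * Matrix.of (fun k l => ∫ U, g U k l ∂μ) * C) p q
      = ∫ U, (Bm * g U * C) p q ∂μ := by
  simp only [Matrix.mul_apply, Matrix.of_apply, Finset.sum_mul]
  rw [integral_finset_sum _ (fun l _ => integrable_finset_sum _
    (fun k _ => ((hg k l).const_mul _).mul_const _))]
  refine Finset.sum_congr rfl fun l _ => ?_
  rw [integral_finset_sum _ (fun k _ => ((hg k l).const_mul _).mul_const _)]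
  refine Finset.sum_congr rfl fun k _ => ?_
  rw [integral_mul_const, integral_const_mul]

lemma trace_mul_integral (P : Matrix (Fin n × Fin n) (Fin n × Fin n) ℂ)
    (g : Matrix.unitaryGroup (Fin n) ℂ → Matrix (Fin n × Fin n) (Fin n × Fin n) ℂ)
    (hg : ∀ k l, Integrable (fun U => g U k l) μ) :
    Matrix.trace (P * Matrix.of (fun k l => ∫ U, g U k l ∂μ))
      = ∫ U, Matrix.trace (P * g U) ∂μ := by
  simp only [Matrix.trace, Matrix.diag_apply, Matrix.mul_apply, Matrix.of_apply]
  rw [integral_finset_sum _ (fun p _ => integrable_finset_sum _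
    (fun k _ => (hg k p).const_mul (P p k)))]
  refine Finset.sum_congr rfl fun p _ => ?_
  rw [integral_finset_sum _ (fun k _ => (hg k p).const_mul (P p k))]
  exact Finset.sum_congr rfl fun k _ => (integral_const_mul _ _).symm

end Integration

/-- The Werner twirling channel `X ↦ ∫ (U⊗U)X(U⊗U)ᴴ dμ(U)` equals
`X ↦ (2/(n(n+1)))·⟨P0,X⟩·P0 + (2/(n(n−1)))·⟨P1,X⟩·P1`, where `P0, P1` are the
projections onto the symmetric and antisymmetric subspaces. -/
theorem stmt_17 (n : ℕ) (hn : 2 ≤ n)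
    [MeasurableSpace (Matrix.unitaryGroup (Fin n) ℂ)]
    [BorelSpace (Matrix.unitaryGroup (Fin n) ℂ)]
    (μ : Measure (Matrix.unitaryGroup (Fin n) ℂ))
    [μ.IsHaarMeasure] [IsProbabilityMeasure μ]
    (W : Matrix (Fin n × Fin n) (Fin n × Fin n) ℂ)
    (hW : W = ∑ j : Fin n, ∑ k : Fin n,
      Matrix.single j k (1 : ℂ) ⊗ₖ Matrix.single k j (1 : ℂ))
    (P0 P1 : Matrix (Fin n × Fin n) (Fin n × Fin n) ℂ)
    (hP0 : P0 = ((1 : ℂ) / 2) • (1 + W))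
    (hP1 : P1 = ((1 : ℂ) / 2) • (1 - W)) :
    ∀ (X : Matrix (Fin n × Fin n) (Fin n × Fin n) ℂ) (i j : Fin n × Fin n),
      (∫ U : Matrix.unitaryGroup (Fin n) ℂ,
        (((U : Matrix (Fin n) (Fin n) ℂ) ⊗ₖ (U : Matrix (Fin n) (Fin n) ℂ)) * X *
          ((U : Matrix (Fin n) (Fin n) ℂ) ⊗ₖ (U : Matrix (Fin n) (Fin n) ℂ))ᴴ) i j ∂μ) =
      ((2 / ((n : ℂ) * ((n : ℂ) + 1)) * Matrix.trace (P0ᴴ * X)) • P0 +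
       (2 / ((n : ℂ) * ((n : ℂ) - 1)) * Matrix.trace (P1ᴴ * X)) • P1) i j := by
  intro X i j
  have hW' : W = swapMat n := hW.trans (swapMat_eq n)
  set M : Matrix (Fin n × Fin n) (Fin n × Fin n) ℂ :=
    Matrix.of (fun p q => ∫ U : Matrix.unitaryGroup (Fin n) ℂ,
      (((U : Matrix (Fin n) (Fin n) ℂ) ⊗ₖ (U : Matrix (Fin n) (Fin n) ℂ)) * X *
        ((U : Matrix (Fin n) (Fin n) ℂ) ⊗ₖ (U : Matrix (Fin n) (Fin n) ℂ))ᴴ) p q ∂μ)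
    with hMdef
  have hint := kf_integrable (n := n) μ X
  -- kronecker of coe respects multiplication
  have hBmul : ∀ V U : Matrix.unitaryGroup (Fin n) ℂ,
      (((V * U : Matrix.unitaryGroup (Fin n) ℂ) : Matrix (Fin n) (Fin n) ℂ) ⊗ₖ
        ((V * U : Matrix.unitaryGroup (Fin n) ℂ) : Matrix (Fin n) (Fin n) ℂ))
      = ((V : Matrix (Fin n) (Fin n) ℂ) ⊗ₖ (V : Matrix (Fin n) (Fin n) ℂ)) *
        ((U : Matrix (Fin n) (Fin n) ℂ) ⊗ₖ (U : Matrix (Fin n) (Fin n) ℂ)) := by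
    intro V U
    have hc : ((V * U : Matrix.unitaryGroup (Fin n) ℂ) : Matrix (Fin n) (Fin n) ℂ)
        = (V : Matrix (Fin n) (Fin n) ℂ) * (U : Matrix (Fin n) (Fin n) ℂ) := rfl
    rw [hc, Matrix.mul_kronecker_mul]
  have hBdag : ∀ U : Matrix.unitaryGroup (Fin n) ℂ,
      ((U : Matrix (Fin n) (Fin n) ℂ) ⊗ₖ (U : Matrix (Fin n) (Fin n) ℂ))ᴴ *
        ((U : Matrix (Fin n) (Fin n) ℂ) ⊗ₖ (U : Matrix (Fin n) (Fin n) ℂ)) = 1 := by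
    intro U
    have h := Matrix.mem_unitaryGroup_iff'.mp U.2
    rw [Matrix.star_eq_conjTranspose] at h
    rw [kron_conjT, ← Matrix.mul_kronecker_mul, h, Matrix.one_kronecker_one]
  -- invariance of M
  have hMcomm : ∀ V : Matrix.unitaryGroup (Fin n) ℂ,
      ((V : Matrix (Fin n) (Fin n) ℂ) ⊗ₖ (V : Matrix (Fin n) (Fin n) ℂ)) * M
        = M * ((V : Matrix (Fin n) (Fin n) ℂ) ⊗ₖ (V : Matrix (Fin n) (Fin n) ℂ)) := by
    intro V
    have key : ((V : Matrix (Fin n) (Fin n) ℂ) ⊗ₖ (V : Matrix (Fin n) (Fin n) ℂ)) * M *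
        ((V : Matrix (Fin n) (Fin n) ℂ) ⊗ₖ (V : Matrix (Fin n) (Fin n) ℂ))ᴴ = M := by
      ext p q
      rw [hMdef]
      rw [mul_integral_mul μ _ _ _ hint p q]
      have hpt : (fun U : Matrix.unitaryGroup (Fin n) ℂ =>
          (((V : Matrix (Fin n) (Fin n) ℂ) ⊗ₖ (V : Matrix (Fin n) (Fin n) ℂ)) *
            ((((U : Matrix (Fin n) (Fin n) ℂ) ⊗ₖ (U : Matrix (Fin n) (Fin n) ℂ)) * X *
              ((U : Matrix (Fin n) (Fin n) ℂ) ⊗ₖ (U : Matrix (Fin n) (Fin n) ℂ))ᴴ)) *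
            ((V : Matrix (Fin n) (Fin n) ℂ) ⊗ₖ (V : Matrix (Fin n) (Fin n) ℂ))ᴴ) p q)
          = fun U : Matrix.unitaryGroup (Fin n) ℂ =>
            ((((V * U : Matrix.unitaryGroup (Fin n) ℂ) : Matrix (Fin n) (Fin n) ℂ) ⊗ₖ
              ((V * U : Matrix.unitaryGroup (Fin n) ℂ) : Matrix (Fin n) (Fin n) ℂ)) * X *
              (((V * U : Matrix.unitaryGroup (Fin n) ℂ) : Matrix (Fin n) (Fin n) ℂ) ⊗ₖ
              ((V * U : Matrix.unitaryGroup (Fin n) ℂ) : Matrix (Fin n) (Fin n) ℂ))ᴴ) p q := by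
        funext U
        rw [hBmul V U, Matrix.conjTranspose_mul]
        simp only [Matrix.mul_assoc]
      rw [hpt]
      exact integral_mul_left_eq_self (μ := μ) (fun U : Matrix.unitaryGroup (Fin n) ℂ =>
        (((U : Matrix (Fin n) (Fin n) ℂ) ⊗ₖ (U : Matrix (Fin n) (Fin n) ℂ)) * X *
          ((U : Matrix (Fin n) (Fin n) ℂ) ⊗ₖ (U : Matrix (Fin n) (Fin n) ℂ))ᴴ) p q) V
    calc ((V : Matrix (Fin n) (Fin n) ℂ) ⊗ₖ (V : Matrix (Fin n) (Fin n) ℂ)) * M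
        = ((V : Matrix (Fin n) (Fin n) ℂ) ⊗ₖ (V : Matrix (Fin n) (Fin n) ℂ)) * M *
          (((V : Matrix (Fin n) (Fin n) ℂ) ⊗ₖ (V : Matrix (Fin n) (Fin n) ℂ))ᴴ *
            ((V : Matrix (Fin n) (Fin n) ℂ) ⊗ₖ (V : Matrix (Fin n) (Fin n) ℂ))) := by
          rw [hBdag V, Matrix.mul_one]
      _ = (((V : Matrix (Fin n) (Fin n) ℂ) ⊗ₖ (V : Matrix (Fin n) (Fin n) ℂ)) * M *
            ((V : Matrix (Fin n) (Fin n) ℂ) ⊗ₖ (V : Matrix (Fin n) (Fin n) ℂ))ᴴ) *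
          ((V : Matrix (Fin n) (Fin n) ℂ) ⊗ₖ (V : Matrix (Fin n) (Fin n) ℂ)) := by
          simp only [Matrix.mul_assoc]
      _ = M * ((V : Matrix (Fin n) (Fin n) ℂ) ⊗ₖ (V : Matrix (Fin n) (Fin n) ℂ)) := by
          rw [key]
  obtain ⟨β, γ, hMeq⟩ := commutant_lemma hn M hMcomm
  -- trace identities
  have hcommP : ∀ P : Matrix (Fin n × Fin n) (Fin n × Fin n) ℂ,
      (∀ U : Matrix.unitaryGroup (Fin n) ℂ,
        P * ((U : Matrix (Fin n) (Fin n) ℂ) ⊗ₖ (U : Matrix (Fin n) (Fin n) ℂ))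
          = ((U : Matrix (Fin n) (Fin n) ℂ) ⊗ₖ (U : Matrix (Fin n) (Fin n) ℂ)) * P) →
      Matrix.trace (P * M) = Matrix.trace (P * X) := by
    intro P hP
    rw [hMdef, trace_mul_integral μ P _ hint]
    have hpt : ∀ U : Matrix.unitaryGroup (Fin n) ℂ,
        Matrix.trace (P * (((U : Matrix (Fin n) (Fin n) ℂ) ⊗ₖ (U : Matrix (Fin n) (Fin n) ℂ)) * X *
          ((U : Matrix (Fin n) (Fin n) ℂ) ⊗ₖ (U : Matrix (Fin n) (Fin n) ℂ))ᴴ))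
        = Matrix.trace (P * X) := by
      intro U
      have h1 : P * (((U : Matrix (Fin n) (Fin n) ℂ) ⊗ₖ (U : Matrix (Fin n) (Fin n) ℂ)) * X *
          ((U : Matrix (Fin n) (Fin n) ℂ) ⊗ₖ (U : Matrix (Fin n) (Fin n) ℂ))ᴴ)
          = ((U : Matrix (Fin n) (Fin n) ℂ) ⊗ₖ (U : Matrix (Fin n) (Fin n) ℂ)) *
            (P * X * ((U : Matrix (Fin n) (Fin n) ℂ) ⊗ₖ (U : Matrix (Fin n) (Fin n) ℂ))ᴴ) := by
        simp only [← Matrix.mul_assoc]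
        rw [hP U]
      rw [h1, Matrix.trace_mul_comm, Matrix.mul_assoc, hBdag U, Matrix.mul_one]
    simp only [hpt]
    simp
  have hWcomm : ∀ U : Matrix.unitaryGroup (Fin n) ℂ,
      swapMat n * ((U : Matrix (Fin n) (Fin n) ℂ) ⊗ₖ (U : Matrix (Fin n) (Fin n) ℂ))
        = ((U : Matrix (Fin n) (Fin n) ℂ) ⊗ₖ (U : Matrix (Fin n) (Fin n) ℂ)) * swapMat n :=
    fun U => swap_comm_kron _ _
  have hP0c : ∀ U : Matrix.unitaryGroup (Fin n) ℂ,
      P0 * ((U : Matrix (Fin n) (Fin n) ℂ) ⊗ₖ (U : Matrix (Fin n) (Fin n) ℂ))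
        = ((U : Matrix (Fin n) (Fin n) ℂ) ⊗ₖ (U : Matrix (Fin n) (Fin n) ℂ)) * P0 := by
    intro U
    rw [hP0, hW', smul_mul_assoc, mul_smul_comm, Matrix.add_mul, Matrix.mul_add,
      Matrix.one_mul, Matrix.mul_one, hWcomm U]
  have hP1c : ∀ U : Matrix.unitaryGroup (Fin n) ℂ,
      P1 * ((U : Matrix (Fin n) (Fin n) ℂ) ⊗ₖ (U : Matrix (Fin n) (Fin n) ℂ))
        = ((U : Matrix (Fin n) (Fin n) ℂ) ⊗ₖ (U : Matrix (Fin n) (Fin n) ℂ)) * P1 := by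
    intro U
    rw [hP1, hW', smul_mul_assoc, mul_smul_comm, Matrix.sub_mul, Matrix.mul_sub,
      Matrix.one_mul, Matrix.mul_one, hWcomm U]
  have htr0 : Matrix.trace (P0 * M) = Matrix.trace (P0 * X) := hcommP P0 hP0c
  have htr1 : Matrix.trace (P1 * M) = Matrix.trace (P1 * X) := hcommP P1 hP1c
  -- conjTranspose of the projections
  have hstar : star ((1:ℂ)/2) = (1:ℂ)/2 := by norm_num
  have hP0H : P0ᴴ = P0 := by
    rw [hP0, hW', Matrix.conjTranspose_smul, Matrix.conjTranspose_add,
      Matrix.conjTranspose_one, swapMat_conjTranspose, hstar]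
  have hP1H : P1ᴴ = P1 := by
    rw [hP1, hW', Matrix.conjTranspose_smul, Matrix.conjTranspose_sub,
      Matrix.conjTranspose_one, swapMat_conjTranspose, hstar]
  -- nonvanishing denominators
  have hn0 : (n:ℂ) ≠ 0 := Nat.cast_ne_zero.mpr (by omega)
  have hn1 : (n:ℂ) + 1 ≠ 0 := by
    intro h
    have := congrArg Complex.re h
    simp [Complex.add_re, Complex.natCast_re] at this
    nlinarith [this]
  have hn2 : (n:ℂ) - 1 ≠ 0 := by
    intro h
    have := congrArg Complex.re h
    simp [Complex.sub_re, Complex.natCast_re] at this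
    have h2 : (2:ℝ) ≤ (n:ℝ) := by exact_mod_cast hn
    nlinarith [this]
  -- the two scalar coefficients
  have hc0 : 2 / ((n : ℂ) * ((n : ℂ) + 1)) * Matrix.trace (P0ᴴ * X) = β + γ := by
    rw [hP0H, ← htr0, hMeq, hP0, hW']
    simp only [Matrix.add_mul, Matrix.mul_add, smul_mul_assoc, mul_smul_comm,
      Matrix.mul_one, Matrix.one_mul, swapMat_mul_self, Matrix.trace_add, Matrix.trace_smul,
      Matrix.trace_one, trace_swapMat, smul_eq_mul, Fintype.card_prod, Fintype.card_fin]
    push_cast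
    field_simp
    ring
  have hc1 : 2 / ((n : ℂ) * ((n : ℂ) - 1)) * Matrix.trace (P1ᴴ * X) = β - γ := by
    rw [hP1H, ← htr1, hMeq, hP1, hW']
    simp only [Matrix.sub_mul, Matrix.mul_sub, Matrix.add_mul, Matrix.mul_add,
      smul_mul_assoc, mul_smul_comm, Matrix.mul_one, Matrix.one_mul, swapMat_mul_self,
      Matrix.trace_add, Matrix.trace_sub, Matrix.trace_smul, Matrix.trace_one, trace_swapMat,
      smul_eq_mul, Fintype.card_prod, Fintype.card_fin]
    push_cast
    field_simp
    ring
  -- finish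
  have hgoal : (∫ U : Matrix.unitaryGroup (Fin n) ℂ,
      (((U : Matrix (Fin n) (Fin n) ℂ) ⊗ₖ (U : Matrix (Fin n) (Fin n) ℂ)) * X *
        ((U : Matrix (Fin n) (Fin n) ℂ) ⊗ₖ (U : Matrix (Fin n) (Fin n) ℂ))ᴴ) i j ∂μ)
      = M i j := by rw [hMdef]; rfl
  rw [hgoal, hc0, hc1, hMeq, hP0, hP1, hW']
  simp only [Matrix.add_apply, Matrix.smul_apply, Matrix.sub_apply, Matrix.one_apply,
    smul_eq_mul]
  ring
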